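/- arXiv:2504.20539 — 2 statements merged into one kernel-verified Lean document; each statement's English description precedes it below -/
import Mathlib

section
/- For every k ≥ 0, the sign vector x♮_(k) ∈ {±1}^{2^k} satisfies ‖H_k x♮_(k)‖_∞ = 2^{⌈k/2⌉}; that is, ‖H_k x♮_(k)‖_∞ = √2 · √(2^k) if k is odd and ‖H_k x♮_(k)‖_∞ = √(2^k) if k is even. -/
open scoped Matrix

/-- Canonical identification `Fin 2ᵏ ⊕ Fin 2ᵏ ≃ Fin 2ᵏ⁺¹` (first summand = first half). -/
def sumEquiv (k : ℕ) : Fin (2 ^ k) ⊕ Fin (2 ^ k) ≃ Fin (2 ^ (k + 1)) :=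
  finSumFinEquiv.trans (finCongr (by rw [pow_succ]; ring))

/-- The Sylvester–Hadamard matrices: `H 0 = (1)` and
`H (k+1) = [[H k, H k], [H k, −H k]]` (a `2ᵏ × 2ᵏ` matrix with `±1` entries). -/
def sylvesterHadamard : (k : ℕ) → Matrix (Fin (2 ^ k)) (Fin (2 ^ k)) ℝ
  | 0 => fun _ _ => 1
  | k + 1 =>
    Matrix.reindex (sumEquiv k) (sumEquiv k)
      (Matrix.fromBlocks (sylvesterHadamard k) (sylvesterHadamard k)
        (sylvesterHadamard k) (-(sylvesterHadamard k)))

/-- Canonical identification `Fin 2² × Fin 2ᵏ ≃ Fin 2ᵏ⁺²` (first factor most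
significant), under which `H (k+2) = H 2 ⊗ H k` as a Kronecker product. -/
def prodEquiv (k : ℕ) : Fin (2 ^ 2) × Fin (2 ^ k) ≃ Fin (2 ^ (k + 2)) :=
  finProdFinEquiv.trans (finCongr (by rw [← pow_add, Nat.add_comm]))

/-- The vector `y = (1, 1, 1, −1)`. -/
def ySign : Fin (2 ^ 2) → ℝ := ![1, 1, 1, -1]

/-- The sign vectors `x♮`: `x♮ 0 = (1)`, `x♮ 1 = (1, 1)` and `x♮ (k+2) = y ⊗ x♮ k`
(Kronecker product of vectors, via the canonical identification `prodEquiv`). -/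
def xNat : (k : ℕ) → (Fin (2 ^ k) → ℝ)
  | 0 => fun _ => 1
  | 1 => fun _ => 1
  | k + 2 => fun i =>
      ySign ((prodEquiv k).symm i).1 * xNat k ((prodEquiv k).symm i).2

/-- `x` is a sign vector: all its entries are `±1`. -/
def IsSignVec {n : ℕ} (x : Fin n → ℝ) : Prop := ∀ i, x i = 1 ∨ x i = -1

section Aux

open Matrix

lemma norm_comp_equiv {ι κ : Type*} [Fintype ι] [Fintype κ] (e : ι ≃ κ) (f : κ → ℝ) :
    ‖f ∘ e‖ = ‖f‖ := by
  simp only [Pi.norm_def]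
  congr 1
  refine le_antisymm (Finset.sup_le fun i _ => ?_) (Finset.sup_le fun j _ => ?_)
  · simpa using Finset.le_sup (f := fun b => ‖f b‖₊) (Finset.mem_univ (e i))
  · simpa using Finset.le_sup (f := fun i => ‖(f ∘ e) i‖₊) (Finset.mem_univ (e.symm j))

lemma norm_sumElim {ι κ : Type*} [Fintype ι] [Fintype κ] (f : ι → ℝ) (g : κ → ℝ) :
    ‖Sum.elim f g‖ = max ‖f‖ ‖g‖ := by
  refine le_antisymm ?_ (max_le ?_ ?_)
  · refine (pi_norm_le_iff_of_nonneg (le_max_of_le_left (norm_nonneg f))).2 ?_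
    rintro (i | j)
    · exact le_max_of_le_left (norm_le_pi_norm f i)
    · exact le_max_of_le_right (norm_le_pi_norm g j)
  · refine (pi_norm_le_iff_of_nonneg (norm_nonneg _)).2 fun i => ?_
    exact norm_le_pi_norm (Sum.elim f g) (Sum.inl i)
  · refine (pi_norm_le_iff_of_nonneg (norm_nonneg _)).2 fun j => ?_
    exact norm_le_pi_norm (Sum.elim f g) (Sum.inr j)

lemma hadamard_succ_mulVec (k : ℕ) (v : Fin (2 ^ (k + 1)) → ℝ) :
    (sylvesterHadamard (k + 1)).mulVec v =
      Sum.elim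
        ((sylvesterHadamard k).mulVec (v ∘ sumEquiv k ∘ Sum.inl)
          + (sylvesterHadamard k).mulVec (v ∘ sumEquiv k ∘ Sum.inr))
        ((sylvesterHadamard k).mulVec (v ∘ sumEquiv k ∘ Sum.inl)
          - (sylvesterHadamard k).mulVec (v ∘ sumEquiv k ∘ Sum.inr))
        ∘ (sumEquiv k).symm := by
  show (Matrix.reindex _ _ _).mulVec v = _
  rw [Matrix.reindex_apply, Matrix.submatrix_mulVec_equiv, Equiv.symm_symm,
    Matrix.fromBlocks_mulVec]
  simp [Function.comp_assoc, Matrix.neg_mulVec, sub_eq_add_neg]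

lemma prodEquiv_eq0 (k : ℕ) (b : Fin (2 ^ k)) :
    prodEquiv k ((0 : Fin (2 ^ 2)), b) = sumEquiv (k + 1) (Sum.inl (sumEquiv k (Sum.inl b))) := by
  apply Fin.ext
  simp [prodEquiv, sumEquiv, pow_succ]
  try ring

lemma prodEquiv_eq1 (k : ℕ) (b : Fin (2 ^ k)) :
    prodEquiv k ((1 : Fin (2 ^ 2)), b) = sumEquiv (k + 1) (Sum.inl (sumEquiv k (Sum.inr b))) := by
  apply Fin.ext
  simp [prodEquiv, sumEquiv, pow_succ]
  try ring

lemma prodEquiv_eq2 (k : ℕ) (b : Fin (2 ^ k)) :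
    prodEquiv k ((2 : Fin (2 ^ 2)), b) = sumEquiv (k + 1) (Sum.inr (sumEquiv k (Sum.inl b))) := by
  apply Fin.ext
  simp [prodEquiv, sumEquiv, pow_succ]
  try ring

lemma prodEquiv_eq3 (k : ℕ) (b : Fin (2 ^ k)) :
    prodEquiv k ((3 : Fin (2 ^ 2)), b) = sumEquiv (k + 1) (Sum.inr (sumEquiv k (Sum.inr b))) := by
  apply Fin.ext
  simp [prodEquiv, sumEquiv, pow_succ]
  ring

lemma xNat_add_two (k : ℕ) :
    xNat (k + 2) =
      Sum.elim (Sum.elim (xNat k) (xNat k) ∘ (sumEquiv k).symm)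
               (Sum.elim (xNat k) (-xNat k) ∘ (sumEquiv k).symm)
        ∘ (sumEquiv (k + 1)).symm := by
  funext i
  obtain ⟨t, rfl⟩ := (sumEquiv (k + 1)).surjective i
  rcases t with t | t <;> obtain ⟨u, rfl⟩ := (sumEquiv k).surjective t <;> rcases u with b | b <;>
    simp only [Function.comp_apply, Equiv.symm_apply_apply, Sum.elim_inl, Sum.elim_inr,
      Pi.neg_apply]
  · rw [← prodEquiv_eq0 k b]; simp [xNat, ySign]
  · rw [← prodEquiv_eq1 k b]; simp [xNat, ySign]
  · rw [← prodEquiv_eq2 k b]; simp [xNat, ySign]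
  · rw [← prodEquiv_eq3 k b]; simp [xNat, ySign]

lemma ySign_cases (a : Fin (2 ^ 2)) : ySign a = 1 ∨ ySign a = -1 := by
  fin_cases a <;> simp [ySign]

lemma main_aux (k : ℕ) :
    IsSignVec (xNat k) ∧
      ‖(sylvesterHadamard k).mulVec (xNat k)‖ = 2 ^ ((k + 1) / 2) := by
  induction k using Nat.strong_induction_on with
  | _ k ih =>
  match k with
  | 0 =>
    constructor
    · intro i; left; rfl
    · have : (sylvesterHadamard 0).mulVec (xNat 0) = fun _ => 1 := by
        funext i
        simp [sylvesterHadamard, xNat, Matrix.mulVec, dotProduct]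
      rw [this]
      simp [Pi.norm_def]
  | 1 =>
    constructor
    · intro i; left; rfl
    · rw [hadamard_succ_mulVec 0 (xNat 1)]
      have h1 : (xNat 1 ∘ sumEquiv 0 ∘ Sum.inl : Fin (2^0) → ℝ) = xNat 0 := rfl
      have h2 : (xNat 1 ∘ sumEquiv 0 ∘ Sum.inr : Fin (2^0) → ℝ) = xNat 0 := rfl
      rw [h1, h2]
      have hw : (sylvesterHadamard 0).mulVec (xNat 0) = fun _ => 1 := by
        funext i
        simp [sylvesterHadamard, xNat, Matrix.mulVec, dotProduct]
      rw [hw, norm_comp_equiv, norm_sumElim]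
      norm_num [Pi.norm_def]
      rw [Finset.sup_const Finset.univ_nonempty]
      simp
  | (k + 2) =>
    obtain ⟨hs, hn⟩ := ih k (by omega)
    set H := sylvesterHadamard k with hH
    set x := xNat k with hx
    set w := H.mulVec x with hwdef
    constructor
    · intro i
      rcases ySign_cases ((prodEquiv k).symm i).1 with h1 | h1 <;>
        rcases hs ((prodEquiv k).symm i).2 with h2 | h2 <;>
        rw [show xNat (k + 2) i
            = ySign ((prodEquiv k).symm i).1 * x ((prodEquiv k).symm i).2 from rfl, h1, h2] <;>
        norm_num
    · have hp : xNat (k + 2) ∘ (sumEquiv (k + 1)) ∘ Sum.inl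
          = Sum.elim x x ∘ (sumEquiv k).symm := by
        rw [xNat_add_two]; funext t; simp [← hx]
      have hq : xNat (k + 2) ∘ (sumEquiv (k + 1)) ∘ Sum.inr
          = Sum.elim x (-x) ∘ (sumEquiv k).symm := by
        rw [xNat_add_two]; funext t; simp [← hx]
      have hA : (sylvesterHadamard (k + 1)).mulVec (Sum.elim x x ∘ (sumEquiv k).symm)
          = Sum.elim (w + w) 0 ∘ (sumEquiv k).symm := by
        rw [hadamard_succ_mulVec k]
        have e1 : ((Sum.elim x x ∘ (sumEquiv k).symm) ∘ sumEquiv k ∘ Sum.inl : Fin (2^k) → ℝ) = x := by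
          funext t; simp
        have e2 : ((Sum.elim x x ∘ (sumEquiv k).symm) ∘ sumEquiv k ∘ Sum.inr : Fin (2^k) → ℝ) = x := by
          funext t; simp
        rw [e1, e2, ← hwdef, sub_self]
      have hB : (sylvesterHadamard (k + 1)).mulVec (Sum.elim x (-x) ∘ (sumEquiv k).symm)
          = Sum.elim (0 : Fin (2 ^ k) → ℝ) (w + w) ∘ (sumEquiv k).symm := by
        rw [hadamard_succ_mulVec k]
        have e1 : ((Sum.elim x (-x) ∘ (sumEquiv k).symm) ∘ sumEquiv k ∘ Sum.inl : Fin (2^k) → ℝ) = x := by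
          funext t; simp
        have e2 : ((Sum.elim x (-x) ∘ (sumEquiv k).symm) ∘ sumEquiv k ∘ Sum.inr : Fin (2^k) → ℝ) = -x := by
          funext t; simp
        rw [e1, e2, Matrix.mulVec_neg, ← hwdef, add_neg_cancel, sub_neg_eq_add]
      rw [hadamard_succ_mulVec (k + 1) (xNat (k + 2)), hp, hq, hA, hB]
      have hAB : (Sum.elim (w + w) 0 ∘ (sumEquiv k).symm) + (Sum.elim (0 : Fin (2 ^ k) → ℝ) (w + w) ∘ (sumEquiv k).symm)
          = Sum.elim (w + w) (w + w) ∘ (sumEquiv k).symm := by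
        funext t
        rcases h : (sumEquiv k).symm t with b | b <;> simp [h]
      have hAB' : (Sum.elim (w + w) 0 ∘ (sumEquiv k).symm) - (Sum.elim (0 : Fin (2 ^ k) → ℝ) (w + w) ∘ (sumEquiv k).symm)
          = Sum.elim (w + w) (-(w + w)) ∘ (sumEquiv k).symm := by
        funext t
        rcases h : (sumEquiv k).symm t with b | b <;> simp [h]
      rw [hAB, hAB', norm_comp_equiv, norm_sumElim, norm_comp_equiv, norm_comp_equiv,
        norm_sumElim, norm_sumElim, norm_neg]
      have hww : ‖w + w‖ = 2 * ‖w‖ := by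
        rw [← two_smul ℝ w, norm_smul]
        norm_num
      rw [hww, hn]
      rw [show (k + 2 + 1) / 2 = (k + 1) / 2 + 1 by omega, pow_succ]
      simp [max_self]
      ring

end Aux

/-- For every `k ≥ 0`, the sign vector `x♮ k ∈ {±1}^{2ᵏ}` satisfies
`‖H k · x♮ k‖_∞ = 2^⌈k/2⌉`; that is, `√2·√(2ᵏ)` if `k` is odd and `√(2ᵏ)` if `k` is
even.  (The norm on `Fin n → ℝ` is the sup norm.) -/
theorem sylvesterHadamard_mulVec_xNat_norm (k : ℕ) :
    IsSignVec (xNat k) ∧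
    ‖(sylvesterHadamard k).mulVec (xNat k)‖ = 2 ^ ((k + 1) / 2) ∧
    (Odd k → ‖(sylvesterHadamard k).mulVec (xNat k)‖
        = Real.sqrt 2 * Real.sqrt (2 ^ k)) ∧
    (Even k → ‖(sylvesterHadamard k).mulVec (xNat k)‖ = Real.sqrt (2 ^ k)) := by
  obtain ⟨hs, hn⟩ := main_aux k
  refine ⟨hs, hn, ?_, ?_⟩
  · rintro ⟨m, rfl⟩
    rw [hn, show (2 * m + 1 + 1) / 2 = m + 1 by omega,
      ← Real.sqrt_mul (by norm_num : (0:ℝ) ≤ 2),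
      show (2:ℝ) * 2 ^ (2 * m + 1) = ((2:ℝ) ^ (m + 1)) ^ 2 by ring,
      Real.sqrt_sq (by positivity)]
  · rintro ⟨m, rfl⟩
    rw [hn, show (m + m + 1) / 2 = m by omega,
      show (2:ℝ) ^ (m + m) = ((2:ℝ) ^ m) ^ 2 by ring,
      Real.sqrt_sq (by positivity)]
end

section
/- For every even k ≥ 0, the Sylvester–Hadamard matrix H_k has discrepancy exactly √(2^k) = 2^{k/2}: every x ∈ {±1}^{2^k} satisfies ‖H_k x‖_∞ ≥ 2^{k/2}, and the vector x♮_(k) achieves ‖H_k x♮_(k)‖_∞ = 2^{k/2}. -/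
open scoped Matrix

-- equiv value lemmas
lemma sumEquiv_inl_val (k : ℕ) (j : Fin (2^k)) : (sumEquiv k (Sum.inl j) : ℕ) = j := by
  simp [sumEquiv]

lemma sumEquiv_inr_val (k : ℕ) (j : Fin (2^k)) : (sumEquiv k (Sum.inr j) : ℕ) = 2^k + j := by
  simp [sumEquiv]; omega

lemma prodEquiv_val (k : ℕ) (a : Fin (2^2)) (b : Fin (2^k)) :
    (prodEquiv k (a, b) : ℕ) = b + 2^k * a := by
  simp [prodEquiv, finProdFinEquiv]

lemma xNat_apply (k : ℕ) (a : Fin (2^2)) (b : Fin (2^k)) :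
    xNat (k+2) (prodEquiv k (a, b)) = ySign a * xNat k b := by
  simp [xNat]

-- the four index identities
lemma xNat_ll (k : ℕ) (j : Fin (2^k)) :
    xNat (k+2) (sumEquiv (k+1) (Sum.inl (sumEquiv k (Sum.inl j)))) = xNat k j := by
  have h : sumEquiv (k+1) (Sum.inl (sumEquiv k (Sum.inl j))) = prodEquiv k (0, j) := by
    apply Fin.ext
    rw [prodEquiv_val]
    rw [sumEquiv_inl_val, sumEquiv_inl_val]
    simp
  rw [h, xNat_apply]
  simp [ySign]

lemma xNat_lr (k : ℕ) (j : Fin (2^k)) :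
    xNat (k+2) (sumEquiv (k+1) (Sum.inl (sumEquiv k (Sum.inr j)))) = xNat k j := by
  have h : sumEquiv (k+1) (Sum.inl (sumEquiv k (Sum.inr j))) = prodEquiv k (1, j) := by
    apply Fin.ext
    rw [prodEquiv_val, sumEquiv_inl_val, sumEquiv_inr_val]
    simp [Fin.val_one]; omega
  rw [h, xNat_apply]
  simp [ySign]

lemma xNat_rl (k : ℕ) (j : Fin (2^k)) :
    xNat (k+2) (sumEquiv (k+1) (Sum.inr (sumEquiv k (Sum.inl j)))) = xNat k j := by
  have h : sumEquiv (k+1) (Sum.inr (sumEquiv k (Sum.inl j))) = prodEquiv k (2, j) := by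
    apply Fin.ext
    rw [prodEquiv_val, sumEquiv_inr_val, sumEquiv_inl_val]
    have h2 : ((2 : Fin (2^2)) : ℕ) = 2 := rfl
    show 2^(k+1) + (j:ℕ) = (j:ℕ) + 2^k * ((2 : Fin (2^2)) : ℕ)
    rw [h2, pow_succ]; ring
  rw [h, xNat_apply]
  simp [ySign]

lemma xNat_rr (k : ℕ) (j : Fin (2^k)) :
    xNat (k+2) (sumEquiv (k+1) (Sum.inr (sumEquiv k (Sum.inr j)))) = -xNat k j := by
  have h : sumEquiv (k+1) (Sum.inr (sumEquiv k (Sum.inr j))) = prodEquiv k (3, j) := by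
    apply Fin.ext
    rw [prodEquiv_val, sumEquiv_inr_val, sumEquiv_inr_val]
    have h3 : ((3 : Fin (2^2)) : ℕ) = 3 := rfl
    show 2^(k+1) + (2^k + (j:ℕ)) = (j:ℕ) + 2^k * ((3 : Fin (2^2)) : ℕ)
    rw [h3, pow_succ]; ring
  rw [h, xNat_apply]
  simp [ySign]

lemma mulVec_block (k : ℕ) (x : Fin (2^(k+1)) → ℝ) :
    (sylvesterHadamard (k+1)).mulVec x =
      (Sum.elim
        ((sylvesterHadamard k).mulVec (x ∘ sumEquiv k ∘ Sum.inl)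
          + (sylvesterHadamard k).mulVec (x ∘ sumEquiv k ∘ Sum.inr))
        ((sylvesterHadamard k).mulVec (x ∘ sumEquiv k ∘ Sum.inl)
          - (sylvesterHadamard k).mulVec (x ∘ sumEquiv k ∘ Sum.inr)))
        ∘ (sumEquiv k).symm := by
  show (Matrix.reindex (sumEquiv k) (sumEquiv k) _).mulVec x = _
  rw [Matrix.reindex_apply, Matrix.submatrix_mulVec_equiv, Matrix.fromBlocks_mulVec]
  simp only [Equiv.symm_symm, Matrix.neg_mulVec, Function.comp_assoc, sub_eq_add_neg]

lemma mulVec_block_inl (k : ℕ) (x : Fin (2^(k+1)) → ℝ) (j : Fin (2^k)) :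
    (sylvesterHadamard (k+1)).mulVec x (sumEquiv k (Sum.inl j)) =
      (sylvesterHadamard k).mulVec (x ∘ sumEquiv k ∘ Sum.inl) j
        + (sylvesterHadamard k).mulVec (x ∘ sumEquiv k ∘ Sum.inr) j := by
  rw [mulVec_block]; simp

lemma mulVec_block_inr (k : ℕ) (x : Fin (2^(k+1)) → ℝ) (j : Fin (2^k)) :
    (sylvesterHadamard (k+1)).mulVec x (sumEquiv k (Sum.inr j)) =
      (sylvesterHadamard k).mulVec (x ∘ sumEquiv k ∘ Sum.inl) j
        - (sylvesterHadamard k).mulVec (x ∘ sumEquiv k ∘ Sum.inr) j := by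
  rw [mulVec_block]; simp

lemma step (k : ℕ) (i : Fin (2^(k+2))) :
    ∃ j : Fin (2^k), (sylvesterHadamard (k+2)).mulVec (xNat (k+2)) i =
        2 * (sylvesterHadamard k).mulVec (xNat k) j ∨
      (sylvesterHadamard (k+2)).mulVec (xNat (k+2)) i =
        -(2 * (sylvesterHadamard k).mulVec (xNat k) j) := by
  have hll : (xNat (k+2) ∘ (sumEquiv (k+1)) ∘ Sum.inl) ∘ (sumEquiv k) ∘ Sum.inl = xNat k :=
    funext fun j => xNat_ll k j
  have hlr : (xNat (k+2) ∘ (sumEquiv (k+1)) ∘ Sum.inl) ∘ (sumEquiv k) ∘ Sum.inr = xNat k :=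
    funext fun j => xNat_lr k j
  have hrl : (xNat (k+2) ∘ (sumEquiv (k+1)) ∘ Sum.inr) ∘ (sumEquiv k) ∘ Sum.inl = xNat k :=
    funext fun j => xNat_rl k j
  have hrr : (xNat (k+2) ∘ (sumEquiv (k+1)) ∘ Sum.inr) ∘ (sumEquiv k) ∘ Sum.inr = -xNat k :=
    funext fun j => xNat_rr k j
  obtain ⟨s, rfl⟩ := (sumEquiv (k+1)).surjective i
  cases s with
  | inl p =>
    obtain ⟨t, rfl⟩ := (sumEquiv k).surjective p
    cases t with
    | inl q =>
      refine ⟨q, Or.inl ?_⟩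
      rw [mulVec_block_inl (k+1), mulVec_block_inl k, mulVec_block_inl k,
        hll, hlr, hrl, hrr, Matrix.mulVec_neg]
      simp; ring
    | inr q =>
      refine ⟨q, Or.inl ?_⟩
      rw [mulVec_block_inl (k+1), mulVec_block_inr k, mulVec_block_inr k,
        hll, hlr, hrl, hrr, Matrix.mulVec_neg]
      simp; ring
  | inr p =>
    obtain ⟨t, rfl⟩ := (sumEquiv k).surjective p
    cases t with
    | inl q =>
      refine ⟨q, Or.inl ?_⟩
      rw [mulVec_block_inr (k+1), mulVec_block_inl k, mulVec_block_inl k,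
        hll, hlr, hrl, hrr, Matrix.mulVec_neg]
      simp; ring
    | inr q =>
      refine ⟨q, Or.inr ?_⟩
      rw [mulVec_block_inr (k+1), mulVec_block_inr k, mulVec_block_inr k,
        hll, hlr, hrl, hrr, Matrix.mulVec_neg]
      simp; ring

lemma upper : ∀ m : ℕ, ∀ i, |(sylvesterHadamard (2*m)).mulVec (xNat (2*m)) i| ≤ 2^m := by
  intro m
  induction m with
  | zero =>
    intro i
    show |(sylvesterHadamard 0).mulVec (xNat 0) i| ≤ 1
    simp [sylvesterHadamard, xNat, Matrix.mulVec, dotProduct]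
  | succ m ih =>
    intro i
    show |(sylvesterHadamard (2*m+2)).mulVec (xNat (2*m+2)) i| ≤ 2^(m+1)
    obtain ⟨j, hj | hj⟩ := step (2*m) i <;>
    · rw [hj]
      rw [pow_succ]
      simp only [abs_neg, abs_mul, abs_two]
      calc 2 * |(sylvesterHadamard (2*m)).mulVec (xNat (2*m)) j| ≤ 2 * 2^m :=
            mul_le_mul_of_nonneg_left (ih j) (by norm_num)
        _ = 2^m * 2 := by ring

lemma isSignVec_xNat : ∀ k, IsSignVec (xNat k)
  | 0 => fun _ => Or.inl rfl
  | 1 => fun _ => Or.inl rfl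
  | (k+2) => fun i => by
    have hx := isSignVec_xNat k ((prodEquiv k).symm i).2
    have hy : ∀ a : Fin (2^2), ySign a = 1 ∨ ySign a = -1 := by
      intro a
      fin_cases a <;> norm_num [ySign]
    show ySign ((prodEquiv k).symm i).1 * xNat k ((prodEquiv k).symm i).2 = 1 ∨
      ySign ((prodEquiv k).symm i).1 * xNat k ((prodEquiv k).symm i).2 = -1
    rcases hx with hx | hx <;> rcases hy ((prodEquiv k).symm i).1 with hy | hy <;>
      rw [hx, hy] <;> norm_num

lemma HtH : ∀ k, (sylvesterHadamard k)ᵀ * sylvesterHadamard k = ((2:ℝ)^k) • 1 := by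
  intro k
  induction k with
  | zero =>
    ext i j
    have hij : i = j := Fin.ext (by omega)
    rw [Matrix.mul_apply]
    simp only [Matrix.transpose_apply]
    simp [sylvesterHadamard, Matrix.mul_apply, Matrix.one_apply, hij]
  | succ k ih =>
    show (Matrix.reindex (sumEquiv k) (sumEquiv k) _)ᵀ * (Matrix.reindex (sumEquiv k) (sumEquiv k) _) = _
    rw [Matrix.transpose_reindex]
    rw [Matrix.reindex_apply, Matrix.reindex_apply, Matrix.submatrix_mul_equiv]
    rw [Matrix.fromBlocks_transpose, Matrix.fromBlocks_multiply]
    have hone : (Matrix.fromBlocks (1 : Matrix (Fin (2^k)) (Fin (2^k)) ℝ) 0 0 1).submatrix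
        (sumEquiv k).symm (sumEquiv k).symm = (1 : Matrix (Fin (2^(k+1))) (Fin (2^(k+1))) ℝ) := by
      rw [Matrix.fromBlocks_one, Matrix.submatrix_one_equiv]
    simp only [Matrix.transpose_neg, Matrix.mul_neg, Matrix.neg_mul, neg_neg]
    rw [ih]
    have e1 : ((2:ℝ)^k) • (1 : Matrix (Fin (2^k)) (Fin (2^k)) ℝ) + ((2:ℝ)^k) • 1
        = ((2:ℝ)^(k+1)) • 1 := by
      rw [← add_smul]; ring_nf
    have e2 : ((2:ℝ)^k) • (1 : Matrix (Fin (2^k)) (Fin (2^k)) ℝ) + -(((2:ℝ)^k) • 1) = 0 := by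
      simp
    rw [e1, e2]
    rw [show (0 : Matrix (Fin (2^k)) (Fin (2^k)) ℝ) = ((2:ℝ)^(k+1)) • 0 by simp,
      ← Matrix.fromBlocks_smul, Matrix.fromBlocks_one]
    ext i j
    simp [Matrix.submatrix_apply, Matrix.one_apply, EmbeddingLike.apply_eq_iff_eq]

lemma lower_bound (k m : ℕ) (hm : k = m + m) (x : Fin (2^k) → ℝ) (hx : IsSignVec x) :
    (2:ℝ)^m ≤ ‖(sylvesterHadamard k).mulVec x‖ := by
  set H := sylvesterHadamard k
  set v := H.mulVec x with hv
  have hdot : v ⬝ᵥ v = (2:ℝ)^k * 2^k := by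
    have h1 : x ⬝ᵥ ((Hᵀ * H).mulVec x) = x ⬝ᵥ ((((2:ℝ)^k) • (1 : Matrix (Fin (2^k)) (Fin (2^k)) ℝ)).mulVec x) := by
      rw [HtH k]
    rw [← Matrix.mulVec_mulVec, Matrix.dotProduct_mulVec, Matrix.vecMul_transpose] at h1
    have h2 : (((2:ℝ)^k) • (1 : Matrix (Fin (2^k)) (Fin (2^k)) ℝ)).mulVec x = ((2:ℝ)^k) • x := by
      rw [Matrix.smul_mulVec, Matrix.one_mulVec]
    rw [h2] at h1
    have h3 : x ⬝ᵥ (((2:ℝ)^k) • x) = ((2:ℝ)^k) * (x ⬝ᵥ x) := by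
      simp [dotProduct_smul]
    have h4 : x ⬝ᵥ x = (2:ℝ)^k := by
      unfold dotProduct
      have : ∀ i, x i * x i = 1 := by
        intro i; rcases hx i with h | h <;> rw [h] <;> norm_num
      simp only [this, Finset.sum_const, Finset.card_univ, Fintype.card_fin, nsmul_eq_mul,
        mul_one]
      norm_cast
    rw [h3, h4] at h1
    exact h1
  have hle : (2:ℝ)^k * 2^k ≤ 2^k * (‖v‖ * ‖v‖) := by
    rw [← hdot]
    unfold dotProduct
    calc ∑ i, v i * v i ≤ ∑ _i : Fin (2^k), ‖v‖ * ‖v‖ := by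
          apply Finset.sum_le_sum
          intro i _
          have h := norm_le_pi_norm v i
          have h' : |v i| ≤ ‖v‖ := by rwa [Real.norm_eq_abs] at h
          nlinarith [abs_nonneg (v i), neg_abs_le (v i), le_abs_self (v i)]
      _ = 2^k * (‖v‖ * ‖v‖) := by
          simp [Finset.sum_const, Finset.card_univ]
  have hpk : (0:ℝ) < 2^k := by positivity
  have hvv : (2:ℝ)^k ≤ ‖v‖ * ‖v‖ := by
    nlinarith
  have hmm : (2:ℝ)^m * 2^m = 2^k := by rw [hm, ← pow_add]
  nlinarith [norm_nonneg v, pow_pos (by norm_num : (0:ℝ) < 2) m]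

/-- For every even `k ≥ 0` the Sylvester–Hadamard matrix `H k` has discrepancy exactly
`√(2ᵏ) = 2^{k/2}`: every sign vector `x ∈ {±1}^{2ᵏ}` has `‖H k · x‖_∞ ≥ 2^{k/2}`, and
the sign vector `x♮ k` achieves `‖H k · x♮ k‖_∞ = 2^{k/2}`.  (The norm on
`Fin n → ℝ` is the sup norm.) -/
theorem sylvesterHadamard_discrepancy_even (k : ℕ) (hk : Even k) :
    (∀ x : Fin (2 ^ k) → ℝ, IsSignVec x →
      (2 : ℝ) ^ (k / 2) ≤ ‖(sylvesterHadamard k).mulVec x‖) ∧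
    IsSignVec (xNat k) ∧
    ‖(sylvesterHadamard k).mulVec (xNat k)‖ = 2 ^ (k / 2) ∧
    Real.sqrt (2 ^ k) = 2 ^ (k / 2) := by
  obtain ⟨m, hm⟩ := hk
  have hk2 : k / 2 = m := by omega
  have hsign : IsSignVec (xNat k) := isSignVec_xNat k
  have hub : ‖(sylvesterHadamard k).mulVec (xNat k)‖ ≤ 2 ^ m := by
    apply pi_norm_le_iff_of_nonneg (by positivity) |>.2
    intro i
    rw [Real.norm_eq_abs]
    have h := upper m
    have hkm : k = 2 * m := by omega
    subst hkm
    exact h i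
  refine ⟨fun x hx => ?_, hsign, ?_, ?_⟩
  · rw [hk2]; exact lower_bound k m hm x hx
  · rw [hk2]
    exact le_antisymm hub (lower_bound k m hm _ hsign)
  · rw [hk2]
    have : (2:ℝ)^k = ((2:ℝ)^m)^2 := by rw [hm, ← pow_mul]; ring_nf
    rw [this, Real.sqrt_sq (by positivity)]
end
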